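/- Let A ⊆ B be an algebra extension over a field k. If A is a direct summand of B as a right A-module (equivalently, there exists a right A-linear map E : B → A with E|_A = id_A), then the extension A ⊆ B is right faithfully flatish, i.e. for every left A-module M the map M → B ⊗_A M, m ↦ 1_B ⊗ m, is an isomorphism onto the submodule { Σ_i x_i ⊗ m_i ∈ B ⊗_A M : Σ_i x_i ⊗ 1_B ⊗ m_i = Σ_i 1_B ⊗ x_i ⊗ m_i in B ⊗_A B ⊗_A M }. -/
import Mathlib


open TensorProduct

noncomputable section

universe v

section Extension

variable (k : Type*) [Field k] (B : Type*) [Ring B] [Algebra k B] (A : Subalgebra k B)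

/-- The defining relations of the tensor product `B ⊗_A M` of the right `A`-module `B`
with a left `A`-module `M`, inside `B ⊗[k] M`; the tensor product `B ⊗_A M` is the
corresponding quotient of `B ⊗[k] M`. -/
def modRel (M : Type v) [AddCommGroup M] [Module k M] [Module A M] [IsScalarTower k A M] :
    Submodule k (B ⊗[k] M) :=
  Submodule.span k
    {t : B ⊗[k] M | ∃ (b : B) (a : A) (m : M), t = (b * (a : B)) ⊗ₜ[k] m - b ⊗ₜ[k] (a • m)}

/-- `B` is flat as a right `A`-module: for every injective map `f : M → N` of left `A`-modules,
the induced map `B ⊗_A M → B ⊗_A N` is injective. -/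
def IsRightFlatOver : Prop :=
  ∀ (M N : Type v) [AddCommGroup M] [Module k M] [Module A M] [IsScalarTower k A M]
    [AddCommGroup N] [Module k N] [Module A N] [IsScalarTower k A N]
    (f : M →ₗ[A] N), Function.Injective f →
      Submodule.comap (LinearMap.lTensor B (LinearMap.restrictScalars k f)) (modRel k B A N) ≤
        modRel k B A M

/-- `B` is faithfully flat as a right `A`-module: it is flat, and `B ⊗_A M = 0` implies
`M = 0` for every left `A`-module `M`. -/
def IsRightFaithfullyFlatOver : Prop :=
  IsRightFlatOver.{v} k B A ∧
    ∀ (M : Type v) [AddCommGroup M] [Module k M] [Module A M] [IsScalarTower k A M],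
      modRel k B A M = ⊤ → Subsingleton M

/-- The defining relations of `B ⊗_A B ⊗_A M` inside `B ⊗[k] (B ⊗[k] M)`. -/
def modRel2 (M : Type v) [AddCommGroup M] [Module k M] [Module A M] [IsScalarTower k A M] :
    Submodule k (B ⊗[k] (B ⊗[k] M)) :=
  Submodule.span k
    ({t | ∃ (x : B) (a : A) (y : B) (m : M),
        t = (x * (a : B)) ⊗ₜ[k] (y ⊗ₜ[k] m) - x ⊗ₜ[k] (((a : B) * y) ⊗ₜ[k] m)} ∪
     {t | ∃ (x y : B) (a : A) (m : M),
        t = x ⊗ₜ[k] ((y * (a : B)) ⊗ₜ[k] m) - x ⊗ₜ[k] (y ⊗ₜ[k] (a • m))})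

/-- The unit map `M → B ⊗_A M`, `m ↦ 1 ⊗ m`. -/
def unitMap (M : Type v) [AddCommGroup M] [Module k M] [Module A M] [IsScalarTower k A M] :
    M →ₗ[k] (B ⊗[k] M) ⧸ modRel k B A M :=
  (modRel k B A M).mkQ ∘ₗ (TensorProduct.mk k B M) 1

/-- The map `B ⊗[k] M → B ⊗[k] (B ⊗[k] M)`, `x ⊗ m ↦ x ⊗ 1 ⊗ m - 1 ⊗ x ⊗ m`, whose vanishing
modulo the relations of `B ⊗_A B ⊗_A M` expresses the equality
`Σ xᵢ ⊗ 1 ⊗ mᵢ = Σ 1 ⊗ xᵢ ⊗ mᵢ` in `B ⊗_A B ⊗_A M`. -/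
def diffMap (M : Type v) [AddCommGroup M] [Module k M] [Module A M] [IsScalarTower k A M] :
    B ⊗[k] M →ₗ[k] B ⊗[k] (B ⊗[k] M) :=
  LinearMap.lTensor B ((TensorProduct.mk k B M) 1) - (TensorProduct.mk k B (B ⊗[k] M)) 1

/-- The extension `A ⊆ B` is right faithfully flatish: for every left `A`-module `M`,
the map `m ↦ 1_B ⊗ m` is an isomorphism from `M` onto the submodule
`{Σ xᵢ ⊗ mᵢ ∈ B ⊗_A M | Σ xᵢ ⊗ 1 ⊗ mᵢ = Σ 1 ⊗ xᵢ ⊗ mᵢ in B ⊗_A B ⊗_A M}`. -/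
def IsRightFaithfullyFlatish : Prop :=
  ∀ (M : Type v) [AddCommGroup M] [Module k M] [Module A M] [IsScalarTower k A M],
    Function.Injective (unitMap k B A M) ∧
    Set.range (unitMap k B A M) =
      {t | ∃ t₀ : B ⊗[k] M, (modRel k B A M).mkQ t₀ = t ∧ diffMap k B A M t₀ ∈ modRel2 k B A M}

end Extension


set_option linter.unusedSectionVars false
set_option linter.unnecessarySimpa false

section Aux

variable {k : Type*} [Field k] {B : Type*} [Ring B] [Algebra k B]
  (A : Subalgebra k B) (E : B →ₗ[k] A)

/-- `E` followed by the inclusion `A → B`. -/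
def ebMap : B →ₗ[k] B := A.val.toLinearMap ∘ₗ E

@[simp] lemma ebMap_apply (b : B) : ebMap A E b = (E b : B) := rfl

variable (M : Type v) [AddCommGroup M] [Module k M] [Module A M] [IsScalarTower k A M]

/-- The retraction `B ⊗[k] M → M`, `b ⊗ m ↦ E b • m`. -/
def rMap : B ⊗[k] M →ₗ[k] M :=
  TensorProduct.lift
  { toFun := fun b =>
      { toFun := fun m => E b • m
        map_add' := fun m m' => smul_add _ _ _
        map_smul' := fun c m => smul_comm _ _ _ }
    map_add' := fun b b' => LinearMap.ext fun m => by simp [add_smul]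
    map_smul' := fun c b => LinearMap.ext fun m => by simp [smul_assoc] }

@[simp] lemma rMap_tmul (b : B) (m : M) : rMap A E M (b ⊗ₜ[k] m) = E b • m := rfl

/-- The map `B ⊗ (B ⊗ M) → B ⊗ M`, `x ⊗ y ⊗ m ↦ (E x) y ⊗ m`. -/
def psiMap : B ⊗[k] (B ⊗[k] M) →ₗ[k] B ⊗[k] M :=
  LinearMap.rTensor M (LinearMap.mul' k B ∘ₗ LinearMap.rTensor B (ebMap A E)) ∘ₗ
    (TensorProduct.assoc k B B M).symm.toLinearMap

@[simp] lemma psiMap_tmul (x y : B) (m : M) :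
    psiMap A E M (x ⊗ₜ[k] (y ⊗ₜ[k] m)) = ((E x : B) * y) ⊗ₜ[k] m := by
  simp [psiMap]

lemma modRel_le_ker (hE_lin : ∀ (b : B) (a : A), E (b * (a : B)) = E b * a) :
    modRel k B A M ≤ LinearMap.ker (rMap A E M) := by
  rw [modRel, Submodule.span_le]
  rintro t ⟨b, a, m, rfl⟩
  simp [hE_lin, mul_smul]

lemma psiMap_mem_modRel (hE_lin : ∀ (b : B) (a : A), E (b * (a : B)) = E b * a)
    {t : B ⊗[k] (B ⊗[k] M)} (ht : t ∈ modRel2 k B A M) :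
    psiMap A E M t ∈ modRel k B A M := by
  have hle : modRel2 k B A M ≤ Submodule.comap (psiMap A E M) (modRel k B A M) := by
    rw [modRel2, Submodule.span_le]
    rintro t (⟨x, a, y, m, rfl⟩ | ⟨x, y, a, m, rfl⟩) <;>
      simp only [Set.mem_setOf_eq, SetLike.mem_coe, Submodule.mem_comap, map_sub, psiMap_tmul]
    · have h : ((E (x * (a : B)) : B)) * y = (E x : B) * ((a : B) * y) := by
        rw [hE_lin]; push_cast; rw [mul_assoc]
      rw [h, sub_self]
      exact zero_mem _
    · exact Submodule.subset_span ⟨(E x : B) * y, a, m, by rw [mul_assoc]⟩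
  exact hle ht

lemma delta_mem (t : B ⊗[k] M) :
    LinearMap.rTensor M (ebMap A E) t - (1 : B) ⊗ₜ[k] rMap A E M t ∈ modRel k B A M := by
  induction t using TensorProduct.induction_on with
  | zero => simpa using (modRel k B A M).zero_mem
  | tmul x m =>
      simp only [LinearMap.rTensor_tmul, ebMap_apply, rMap_tmul]
      exact Submodule.subset_span ⟨1, E x, m, by rw [one_mul]⟩
  | add t t' h h' =>
      rw [map_add, map_add, tmul_add, add_sub_add_comm]
      exact add_mem h h'

lemma psi_diff (hE1 : E 1 = 1) (t : B ⊗[k] M) :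
    psiMap A E M (diffMap k B A M t) = LinearMap.rTensor M (ebMap A E) t - t := by
  have h : psiMap A E M ∘ₗ diffMap k B A M =
      LinearMap.rTensor M (ebMap A E) - LinearMap.id :=
    TensorProduct.ext' fun x m => by
      simp [diffMap, hE1]
  simpa using DFunLike.congr_fun h t

end Aux

/-- Let `A ⊆ B` be an algebra extension over a field `k`.  If `A` is a direct
summand of `B` as a right `A`-module (equivalently, there is a right `A`-linear map
`E : B → A` with `E|_A = id`), then the extension `A ⊆ B` is right faithfully flatish. -/
theorem rightFaithfullyFlatish_of_conditionalExpectation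
    {k : Type*} [Field k] {B : Type*} [Ring B] [Algebra k B]
    (A : Subalgebra k B)
    (E : B →ₗ[k] A) (hE_id : ∀ a : A, E (a : B) = a)
    (hE_lin : ∀ (b : B) (a : A), E (b * (a : B)) = E b * a) :
    IsRightFaithfullyFlatish.{v} k B A := by
  have hE1 : E 1 = 1 := by simpa using hE_id 1
  intro M _ _ _ _
  have hker := modRel_le_ker A E M hE_lin
  have hr1 : ∀ m : M, rMap A E M ((1 : B) ⊗ₜ[k] m) = m := fun m => by
    rw [rMap_tmul, hE1, one_smul]
  constructor
  · intro m m' h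
    simp only [unitMap, LinearMap.comp_apply, TensorProduct.mk_apply,
      Submodule.mkQ_apply] at h
    have h2 : (1 : B) ⊗ₜ[k] m - (1 : B) ⊗ₜ[k] m' ∈ modRel k B A M :=
      (Submodule.Quotient.eq _).mp h
    have h3 := hker h2
    rw [LinearMap.mem_ker, map_sub, hr1, hr1] at h3
    exact sub_eq_zero.mp h3
  · ext t
    simp only [Set.mem_range, Set.mem_setOf_eq]
    constructor
    · rintro ⟨m, rfl⟩
      refine ⟨(1 : B) ⊗ₜ[k] m, rfl, ?_⟩
      have hz : diffMap k B A M ((1 : B) ⊗ₜ[k] m) = 0 := by simp [diffMap]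
      rw [hz]
      exact zero_mem _
    · rintro ⟨t₀, rfl, hd⟩
      refine ⟨rMap A E M t₀, ?_⟩
      have h1 : psiMap A E M (diffMap k B A M t₀) ∈ modRel k B A M :=
        psiMap_mem_modRel A E M hE_lin hd
      rw [psi_diff A E M hE1] at h1
      have h2 := delta_mem A E M t₀
      have h3 := sub_mem h1 h2
      have he : (LinearMap.rTensor M (ebMap A E) t₀ - t₀) -
          (LinearMap.rTensor M (ebMap A E) t₀ - (1 : B) ⊗ₜ[k] rMap A E M t₀) =
          (1 : B) ⊗ₜ[k] rMap A E M t₀ - t₀ := by abel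
      rw [he] at h3
      simp only [unitMap, LinearMap.comp_apply, TensorProduct.mk_apply,
        Submodule.mkQ_apply]
      exact (Submodule.Quotient.eq _).mpr h3


end
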